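/- Suppose there exist C > 0 and ν ≥ 1 such that dist((t ã_0/(2π), …, t ã_m/(2π)), ℤ^{m+1}) ≥ C t^{1−ν} for every real t ≥ 1. Then there exists c > 0 such that for every ε > 0, every real T ≥ 1 and every z ∈ ℂ^{m+1}: if there exist t ∈ [1, T] and an integer k with ‖φ_t(z) − g^k·z‖ ≤ ε (Euclidean norm on ℂ^{m+1}), then min_{0≤j≤m} |z_j| ≤ c · ε · T^{ν−1}. -/

import Mathlib

open scoped Real

/-- The set of integer lattice points in Euclidean space `ℝ^{m+1}`. -/
def intLattice (m : ℕ) : Set (EuclideanSpace ℝ (Fin (m + 1))) :=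
  {w | ∀ j, ∃ n : ℤ, w j = (n : ℝ)}

/-- The linear flow `φ_t(z)_j = e^{i a_j t} z_j` on `ℂ^{m+1}`. -/
noncomputable def linFlow (m : ℕ) (a : Fin (m + 1) → ℝ) (t : ℝ)
    (z : EuclideanSpace ℂ (Fin (m + 1))) : EuclideanSpace ℂ (Fin (m + 1)) :=
  WithLp.toLp 2 (fun j => Complex.exp (Complex.I * (a j : ℂ) * (t : ℂ)) * z j)

/-- The `k`-th power of the generator of the `ℤ/q_0` action:
`(g^k · z)_j = e^{2πi k r_j/q_0} z_j`. -/
noncomputable def lensAction (m : ℕ) (q0 : ℕ) (r : Fin (m + 1) → ℕ) (k : ℤ)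
    (z : EuclideanSpace ℂ (Fin (m + 1))) : EuclideanSpace ℂ (Fin (m + 1)) :=
  WithLp.toLp 2 (fun j => Complex.exp (2 * (Real.pi : ℂ) * Complex.I * (k : ℂ) * (r j : ℂ) / (q0 : ℂ)) * z j)

/-- `2·dist(θ,ℤ) ≤ |sin(πθ)|`. -/
lemma sin_round_lower (θ : ℝ) : 2 * |θ - round θ| ≤ |Real.sin (π * θ)| := by
  have hπ : (0:ℝ) < π := Real.pi_pos
  set n : ℤ := round θ with hn
  set d : ℝ := θ - n with hdd
  have hd : |d| ≤ 1/2 := abs_sub_round θ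
  have h1 : |Real.sin (π * θ)| = |Real.sin (π * d)| := by
    have e : π * θ = π * d + n * π := by rw [hdd]; push_cast; ring
    rw [e, Real.sin_add_int_mul_pi, abs_mul]
    have hn1 : |(-1 : ℝ) ^ n| = 1 := by
      rcases Int.even_or_odd n with he | ho
      · rw [he.neg_one_zpow]; simp
      · rw [Odd.neg_one_zpow ho]; simp
    rw [hn1, one_mul]
  have h2 : |Real.sin (π * d)| = |Real.sin (π * |d|)| := by
    rcases le_or_gt 0 d with h | h
    · rw [abs_of_nonneg h]
    · rw [abs_of_neg h, mul_neg, Real.sin_neg, abs_neg]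
  have h3 : 2 * |d| ≤ Real.sin (π * |d|) := by
    have hb : π * |d| ≤ π / 2 := by nlinarith [abs_nonneg d]
    have := Real.mul_le_sin (x := π * |d|) (by positivity) hb
    calc 2 * |d| = 2 / π * (π * |d|) := by field_simp
    _ ≤ Real.sin (π * |d|) := this
  rw [h1, h2]
  exact h3.trans (le_abs_self _)

/-- Chord lower bound: `4·dist(θ,ℤ) ≤ |e^{2πiθ} - 1|`. -/
lemma chord_lower (θ : ℝ) :
    4 * |θ - round θ| ≤ ‖Complex.exp ((2 * π * θ : ℝ) * Complex.I) - 1‖ := by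
  have habs : ‖Complex.exp ((2 * π * θ : ℝ) * Complex.I) - 1‖
      = 2 * |Real.sin (π * θ)| := by
    rw [Complex.exp_mul_I]
    have h1 : Complex.cos ((2 * π * θ : ℝ) : ℂ) + Complex.sin ((2 * π * θ : ℝ) : ℂ) * Complex.I - 1
        = ((Real.cos (2 * π * θ) - 1 : ℝ) : ℂ) + ((Real.sin (2 * π * θ) : ℝ) : ℂ) * Complex.I := by
      rw [← Complex.ofReal_cos, ← Complex.ofReal_sin]; push_cast; ring
    rw [h1, Complex.norm_add_mul_I]
    have hsc := Real.sin_sq_add_cos_sq (2 * π * θ)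
    have hdb : Real.cos (2 * (π * θ)) = 2 * Real.cos (π * θ) ^ 2 - 1 := Real.cos_two_mul _
    have e : 2 * π * θ = 2 * (π * θ) := by ring
    rw [e] at hsc ⊢
    have hsc2 := Real.sin_sq_add_cos_sq (π * θ)
    have h2 : (Real.cos (2 * (π * θ)) - 1) ^ 2 + Real.sin (2 * (π * θ)) ^ 2
        = (2 * |Real.sin (π * θ)|) ^ 2 := by
      have h3 : (2 * |Real.sin (π * θ)|) ^ 2 = 4 * Real.sin (π * θ) ^ 2 := by
        rw [mul_pow, sq_abs]; ring
      rw [h3]; linear_combination hsc - 2 * hdb - 4 * hsc2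
    rw [h2, Real.sqrt_sq (by positivity)]
  rw [habs]
  have := sin_round_lower θ
  linarith

/-- Each coordinate norm is at most the Euclidean norm. -/
lemma coord_norm_le {𝕜 : Type*} [RCLike 𝕜] {n : ℕ} (v : EuclideanSpace 𝕜 (Fin n)) (j : Fin n) :
    ‖v j‖ ≤ ‖v‖ := by
  rw [EuclideanSpace.norm_eq]
  exact Real.le_sqrt_of_sq_le
    (Finset.single_le_sum (f := fun i => ‖v i‖ ^ 2) (fun i _ => sq_nonneg _) (Finset.mem_univ j))

set_option maxHeartbeats 1000000 in
theorem lens_recurrence_set_bound (m : ℕ) (hm : 1 ≤ m)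
    (a : Fin (m + 1) → ℝ) (ha : ∀ j, 0 < a j)
    (q0 : ℕ) (hq0 : 1 < q0) (r : Fin (m + 1) → ℕ) (hr0 : r 0 = 1)
    (atil : Fin (m + 1) → ℝ) (hatil0 : atil 0 = q0 * a 0)
    (hatil : ∀ j : Fin (m + 1), j ≠ 0 → atil j = a j - (r j : ℝ) * a 0)
    (C ν : ℝ) (hC : 0 < C) (hν : 1 ≤ ν)
    (hdio : ∀ t : ℝ, 1 ≤ t →
      C * t ^ (1 - ν) ≤ Metric.infDist
        (show EuclideanSpace ℝ (Fin (m + 1)) from WithLp.toLp 2 (fun j => t * atil j / (2 * π)))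
        (intLattice m)) :
    ∃ c : ℝ, 0 < c ∧ ∀ ε : ℝ, 0 < ε → ∀ T : ℝ, 1 ≤ T →
      ∀ z : EuclideanSpace ℂ (Fin (m + 1)),
        (∃ t : ℝ, t ∈ Set.Icc 1 T ∧ ∃ k : ℤ,
          ‖linFlow m a t z - lensAction m q0 r k z‖ ≤ ε) →
        (Finset.univ.inf' Finset.univ_nonempty fun j => ‖z j‖) ≤
          c * ε * T ^ (ν - 1) := by
  have hπ : (0:ℝ) < π := Real.pi_pos
  have hq0R : (0:ℝ) < (q0:ℝ) := by exact_mod_cast Nat.lt_of_lt_of_le Nat.zero_lt_one hq0.le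
  set R : ℝ := 1 + q0 + ∑ i : Fin (m+1), (r i : ℝ) with hR
  have hsum_nonneg : (0:ℝ) ≤ ∑ i : Fin (m+1), (r i : ℝ) :=
    Finset.sum_nonneg fun i _ => by positivity
  have hRpos : 0 < R := by positivity
  set K : ℝ := Real.sqrt (m+1) * R with hK
  have hKpos : 0 < K := by
    apply mul_pos _ hRpos
    exact Real.sqrt_pos.2 (by positivity)
  refine ⟨K / (4*C), by positivity, ?_⟩
  rintro ε hε T hT z ⟨t, ⟨ht1, htT⟩, k, hnorm⟩
  have htpos : (0:ℝ) < t := lt_of_lt_of_le one_pos ht1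
  set θ : Fin (m+1) → ℝ := fun j => a j * t / (2*π) - k * r j / q0 with hθ
  set d : Fin (m+1) → ℝ := fun j => θ j - round (θ j) with hd
  set D : ℝ := Finset.univ.sup' Finset.univ_nonempty (fun j => |d j|) with hD
  have hDge : ∀ j, |d j| ≤ D := fun j => by rw [hD]; exact Finset.le_sup' (fun i => |d i|) (Finset.mem_univ j)
  have hDnn : 0 ≤ D := le_trans (abs_nonneg _) (hDge 0)
  -- Step A: componentwise bound
  have stepA : ∀ j, ‖z j‖ * (4 * |d j|) ≤ ε := by
    intro j
    have hcomp : ‖(linFlow m a t z - lensAction m q0 r k z) j‖ ≤ ε :=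
      le_trans (coord_norm_le _ j) hnorm
    have hq0C : (q0:ℂ) ≠ 0 := by exact_mod_cast hq0R.ne'
    have hπC : (π:ℂ) ≠ 0 := by exact_mod_cast hπ.ne'
    have hjval : (linFlow m a t z - lensAction m q0 r k z) j
        = Complex.exp (2 * (π:ℂ) * Complex.I * (k:ℂ) * ((r j : ℕ):ℂ) / (q0:ℂ)) *
            ((Complex.exp ((2*π*θ j : ℝ) * Complex.I) - 1) * z j) := by
      have hsub : (linFlow m a t z - lensAction m q0 r k z) j
          = Complex.exp (Complex.I * (a j : ℂ) * (t:ℂ)) * z j -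
            Complex.exp (2 * (π:ℂ) * Complex.I * (k:ℂ) * ((r j : ℕ):ℂ) / (q0:ℂ)) * z j := by rw [PiLp.sub_apply]; rfl
      rw [hsub]
      have hexp : Complex.exp (Complex.I * (a j : ℂ) * (t:ℂ))
          = Complex.exp (2 * (π:ℂ) * Complex.I * (k:ℂ) * ((r j : ℕ):ℂ) / (q0:ℂ)) *
              Complex.exp ((2*π*θ j : ℝ) * Complex.I) := by
        rw [← Complex.exp_add]
        congr 1
        show Complex.I * (a j : ℂ) * (t:ℂ)
          = 2 * (π:ℂ) * Complex.I * (k:ℂ) * ((r j : ℕ):ℂ) / (q0:ℂ) +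
            ((2*π*(a j * t / (2*π) - k * r j / q0) : ℝ) : ℂ) * Complex.I
        push_cast
        field_simp
        ring
      rw [hexp]; ring
    rw [hjval] at hcomp
    have hEabs : ‖
        (Complex.exp (2 * (π:ℂ) * Complex.I * (k:ℂ) * ((r j : ℕ):ℂ) / (q0:ℂ)))‖ = 1 := by
      have e : 2 * (π:ℂ) * Complex.I * (k:ℂ) * ((r j : ℕ):ℂ) / (q0:ℂ)
          = ((2 * π * k * (r j : ℕ) / q0 : ℝ) : ℂ) * Complex.I := by push_cast; ring
      rw [e, Complex.norm_exp_ofReal_mul_I]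
    rw [norm_mul, hEabs, one_mul, norm_mul] at hcomp
    have hch := chord_lower (θ j)
    have hzn : 0 ≤ ‖z j‖ := norm_nonneg _
    calc ‖z j‖ * (4 * |d j|)
        ≤ ‖z j‖ * ‖Complex.exp ((2*π*θ j : ℝ) * Complex.I) - 1‖ := by
          apply mul_le_mul_of_nonneg_left _ hzn
          simpa [hd] using hch
      _ ≤ ε := by rw [mul_comm]; exact hcomp
  -- Step B: Diophantine bound gives C T^{1-ν} ≤ K D
  set NZ : Fin (m+1) → ℤ := fun j =>
    if j = 0 then q0 * round (θ 0) + k else round (θ j) - r j * round (θ 0) with hNZ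
  set N : EuclideanSpace ℝ (Fin (m+1)) := WithLp.toLp 2 (fun j => (NZ j : ℝ)) with hNdef
  have hmem : N ∈ intLattice m := fun j => ⟨NZ j, rfl⟩
  set w : EuclideanSpace ℝ (Fin (m+1)) := WithLp.toLp 2 (fun j => t * atil j / (2*π)) with hw
  have hterm : ∀ j : Fin (m+1), |w j - N j| ≤ R * D := by
    intro j
    by_cases hj0 : j = 0
    · subst hj0
      have hval : w 0 - N 0 = q0 * d 0 := by
        simp only [hw, hNdef, PiLp.toLp_apply, hNZ, if_pos rfl, hd, hθ, hatil0, hr0]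
        push_cast
        field_simp
        ring
      rw [hval, abs_mul, abs_of_nonneg hq0R.le]
      have h1 : (q0:ℝ) ≤ R := by rw [hR]; linarith
      exact mul_le_mul h1 (hDge 0) (abs_nonneg _) hRpos.le
    · have hval : w j - N j = d j - (r j : ℝ) * d 0 := by
        simp only [hw, hNdef, PiLp.toLp_apply, hNZ, if_neg hj0, hd, hθ, hatil j hj0, hr0]
        push_cast
        field_simp
        ring
      rw [hval]
      have hrj : (r j : ℝ) ≤ ∑ i : Fin (m+1), (r i : ℝ) :=
        Finset.single_le_sum (f := fun i => (r i : ℝ)) (fun i _ => by positivity)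
          (Finset.mem_univ j)
      calc |d j - (r j : ℝ) * d 0| ≤ |d j| + (r j : ℝ) * |d 0| := by
            refine (abs_sub _ _).trans ?_
            rw [abs_mul, abs_of_nonneg (by positivity : (0:ℝ) ≤ (r j : ℝ))]
        _ ≤ D + (r j : ℝ) * D := by
            have := hDge j; have := hDge 0
            have h0 : (0:ℝ) ≤ (r j : ℝ) := by positivity
            nlinarith [hDge j, hDge 0]
        _ = (1 + (r j : ℝ)) * D := by ring
        _ ≤ R * D := by
            apply mul_le_mul_of_nonneg_right _ hDnn
            rw [hR]; linarith
  have hdist : Metric.infDist w (intLattice m) ≤ K * D := by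
    refine le_trans (Metric.infDist_le_dist_of_mem hmem) ?_
    rw [dist_eq_norm, EuclideanSpace.norm_eq]
    have hsum : (∑ j, ‖(w - N) j‖ ^ 2) ≤ (m+1) * (R * D)^2 := by
      calc (∑ j, ‖(w - N) j‖ ^ 2) ≤ ∑ _j : Fin (m+1), (R * D)^2 := by
            refine Finset.sum_le_sum fun j _ => ?_
            have : ‖(w - N) j‖ = |w j - N j| := by
              rw [PiLp.sub_apply, Real.norm_eq_abs]
            rw [this]
            exact pow_le_pow_left₀ (abs_nonneg _) (hterm j) 2
        _ = (m+1) * (R * D)^2 := by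
            rw [Finset.sum_const, Finset.card_univ, Fintype.card_fin, nsmul_eq_mul]
            push_cast; ring
    calc Real.sqrt (∑ j, ‖(w - N) j‖ ^ 2) ≤ Real.sqrt ((m+1) * (R * D)^2) :=
          Real.sqrt_le_sqrt hsum
      _ = K * D := by
          rw [Real.sqrt_mul (by positivity), Real.sqrt_sq (by positivity), hK]
          push_cast; ring
  have hB : C * T ^ (1-ν) ≤ K * D := by
    have h1 : T ^ (1-ν) ≤ t ^ (1-ν) :=
      Real.rpow_le_rpow_of_nonpos htpos htT (by linarith)
    have h2 : C * T ^ (1-ν) ≤ C * t ^ (1-ν) := mul_le_mul_of_nonneg_left h1 hC.le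
    exact h2.trans ((hdio t ht1).trans hdist)
  have hu : (0:ℝ) < T ^ (1-ν) := Real.rpow_pos_of_pos (by linarith) _
  have hKD : 0 < K * D := lt_of_lt_of_le (mul_pos hC hu) hB
  have hDpos : 0 < D := by
    rcases hDnn.lt_or_eq with h | h
    · exact h
    · rw [← h, mul_zero] at hKD; exact absurd hKD (lt_irrefl 0)
  -- Step C: conclude
  obtain ⟨j0, -, hj0⟩ := Finset.exists_mem_eq_sup' Finset.univ_nonempty (fun j => |d j|)
  have hz : ‖z j0‖ ≤ ε / (4*D) := by
    have hDj : D = |d j0| := hD.trans hj0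
    rw [le_div_iff₀ (by positivity), hDj]
    exact stepA j0
  have hmin : (Finset.univ.inf' Finset.univ_nonempty fun j => ‖z j‖)
      ≤ ‖z j0‖ := Finset.inf'_le _ (Finset.mem_univ j0)
  refine hmin.trans (hz.trans ?_)
  have hv : T ^ (ν-1) = (T ^ (1-ν))⁻¹ := by
    rw [show ν - 1 = -(1-ν) by ring, Real.rpow_neg (by linarith : (0:ℝ) ≤ T)]
  rw [hv]
  have heq : K / (4*C) * ε * (T ^ (1-ν))⁻¹ = (K * ε) / (4 * C * T ^ (1-ν)) := by
    field_simp
  rw [heq, div_le_div_iff₀ (by positivity) (by positivity)]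
  nlinarith [mul_le_mul_of_nonneg_left hB hε.le]
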